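/- Sample complexity lower bound: let P, Q be probability distributions on a finite set, π ∈ (0,1/2], δ ∈ (0,π/16], and λ* = log((1−π)/δ)/(log((1−π)/δ)+log(π/δ)). If e_π(P^⊗n, Q^⊗n) ≤ δ for some n ∈ ℕ, then n ≥ (λ*/2) · log(π/δ) / log(1/β_{λ*}(P,Q)). -/

import Mathlib

open Real Finset

/-- Hellinger-λ affinity between two distributions on a finite set. -/
noncomputable def betaAff {X : Type*} [Fintype X] (l : ℝ) (P Q : X → ℝ) : ℝ :=
  ∑ x, P x ^ l * Q x ^ (1 - l)

/-- Optimal one-shot Bayes error with prior pr. -/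
noncomputable def bayesErr {X : Type*} [Fintype X] (pr : ℝ) (P Q : X → ℝ) : ℝ :=
  ∑ x, min (pr * P x) ((1 - pr) * Q x)

/-- n-fold product distribution. -/
noncomputable def prodD {X : Type*} (n : ℕ) (P : X → ℝ) : (Fin n → X) → ℝ :=
  fun v => ∏ i, P (v i)

/-- The optimal exponent λ* of the one-shot Bayes error lower bound. -/
noncomputable def lambdaStar (pr δ : ℝ) : ℝ :=
  Real.log ((1 - pr) / δ) / (Real.log ((1 - pr) / δ) + Real.log (pr / δ))

/-- Hölder inequality in geometric-mean form. -/
lemma holder_sum {X : Type*} (s : Finset X) (a b : X → ℝ) (ha : ∀ x, 0 ≤ a x)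
    (hb : ∀ x, 0 ≤ b x) {l : ℝ} (hl0 : 0 < l) (hl1 : l < 1) :
    ∑ x ∈ s, a x ^ l * b x ^ (1 - l) ≤ (∑ x ∈ s, a x) ^ l * (∑ x ∈ s, b x) ^ (1 - l) := by
  have hl1' : 0 < 1 - l := by linarith
  have hpq : Real.HolderConjugate (1 / l) (1 / (1 - l)) := by
    constructor
    · simp only [one_div, inv_inv, inv_one]; ring
    · exact one_div_pos.mpr hl0
    · exact one_div_pos.mpr hl1'
  have h := Real.inner_le_Lp_mul_Lq_of_nonneg (s := s) hpq
      (f := fun x => a x ^ l) (g := fun x => b x ^ (1 - l))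
      (fun i _ => Real.rpow_nonneg (ha i) _) (fun i _ => Real.rpow_nonneg (hb i) _)
  have e1 : ∀ x : X, (a x ^ l) ^ (1 / l) = a x := fun x => by
    rw [← Real.rpow_mul (ha x), mul_one_div_cancel hl0.ne', Real.rpow_one]
  have e2 : ∀ x : X, (b x ^ (1 - l)) ^ (1 / (1 - l)) = b x := fun x => by
    rw [← Real.rpow_mul (hb x), mul_one_div_cancel hl1'.ne', Real.rpow_one]
  simp only [e1, e2, one_div_one_div] at h
  exact h

/-- Tensorisation of the Hellinger affinity. -/
lemma betaAff_prodD {X : Type*} [Fintype X] (l : ℝ) (P Q : X → ℝ)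
    (hP0 : ∀ x, 0 ≤ P x) (hQ0 : ∀ x, 0 ≤ Q x) (n : ℕ) :
    betaAff l (prodD n P) (prodD n Q) = betaAff l P Q ^ n := by
  classical
  unfold betaAff prodD
  have h := Finset.sum_pow' (univ : Finset X) (fun x => P x ^ l * Q x ^ (1 - l)) n
  rw [Fintype.piFinset_univ] at h
  rw [h]
  refine Finset.sum_congr rfl fun v _ => ?_
  rw [← Real.finset_prod_rpow _ _ (fun i _ => hP0 _) l,
    ← Real.finset_prod_rpow _ _ (fun i _ => hQ0 _) (1 - l), ← Finset.prod_mul_distrib]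

/-- Sum of the n-fold product distribution. -/
lemma prodD_sum {X : Type*} [Fintype X] (P : X → ℝ) (hP1 : ∑ x, P x = 1) (n : ℕ) :
    ∑ v, prodD n P v = 1 := by
  classical
  unfold prodD
  have h := Finset.sum_pow' (univ : Finset X) P n
  rw [Fintype.piFinset_univ, hP1, one_pow] at h
  exact h.symm

theorem sample_complexity_lower_bound {X : Type*} [Fintype X]
    (P Q : X → ℝ) (hP0 : ∀ x, 0 ≤ P x) (hQ0 : ∀ x, 0 ≤ Q x)
    (hP1 : ∑ x, P x = 1) (hQ1 : ∑ x, Q x = 1)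
    (pr δ : ℝ) (hpr : pr ∈ Set.Ioc (0 : ℝ) (1 / 2)) (hδ0 : 0 < δ) (hδ : δ ≤ pr / 16)
    (hβ : betaAff (lambdaStar pr δ) P Q < 1)
    (n : ℕ) (hn : bayesErr pr (prodD n P) (prodD n Q) ≤ δ) :
    (n : ℝ) ≥ (lambdaStar pr δ / 2) * Real.log (pr / δ) /
      Real.log (1 / betaAff (lambdaStar pr δ) P Q) := by
  classical
  obtain ⟨hpr0, hpr2⟩ := hpr
  set l := lambdaStar pr δ with hldef
  set β := betaAff l P Q with hβdef
  have hpr1 : pr < 1 := by linarith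
  have h1pr : (0:ℝ) < 1 - pr := by linarith
  have hprhalf : pr ≤ 1 - pr := by linarith
  -- basic log facts
  set A := Real.log ((1 - pr) / δ) with hA
  set B := Real.log (pr / δ) with hB
  have hB16 : (16:ℝ) ≤ pr / δ := by
    rw [le_div_iff₀ hδ0]; linarith
  have hA16 : (16:ℝ) ≤ (1 - pr) / δ := by
    refine le_trans hB16 ?_
    gcongr
  have hBpos : 0 < B := Real.log_pos (by linarith)
  have hApos : 0 < A := Real.log_pos (by linarith)
  have hAB : B ≤ A := by
    apply Real.log_le_log (by positivity)
    gcongr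
  have hABpos : 0 < A + B := by linarith
  have hl : l = A / (A + B) := rfl
  have hl0 : 0 < l := by rw [hl]; positivity
  have hl1 : l < 1 := by
    rw [hl, div_lt_one hABpos]; linarith
  have hlhalf : 1 / 2 ≤ l := by
    rw [hl, le_div_iff₀ hABpos]; linarith
  have hl1' : 0 < 1 - l := by linarith
  -- the key identity (δ/(1-pr))^(1-l) = (δ/pr)^l
  have hkey : (δ / (1 - pr)) ^ (1 - l) = (δ / pr) ^ l := by
    rw [Real.rpow_def_of_pos (by positivity), Real.rpow_def_of_pos (by positivity)]
    congr 1
    have e1 : Real.log (δ / (1 - pr)) = -A := by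
      rw [hA, ← Real.log_inv]; congr 1; field_simp
    have e2 : Real.log (δ / pr) = -B := by
      rw [hB, ← Real.log_inv]; congr 1; field_simp
    rw [e1, e2, hl]
    have hone : 1 - A / (A + B) = B / (A + B) := by field_simp; ring
    rw [hone]
    ring
  -- set up the product distributions
  set Pn := prodD n P with hPn
  set Qn := prodD n Q with hQn
  have hPn0 : ∀ v, 0 ≤ Pn v := fun v => Finset.prod_nonneg fun i _ => hP0 _
  have hQn0 : ∀ v, 0 ≤ Qn v := fun v => Finset.prod_nonneg fun i _ => hQ0 _
  have hPn1 : ∑ v, Pn v = 1 := prodD_sum P hP1 n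
  have hQn1 : ∑ v, Qn v = 1 := prodD_sum Q hQ1 n
  set a : (Fin n → X) → ℝ := fun v => pr * Pn v with ha
  set b : (Fin n → X) → ℝ := fun v => (1 - pr) * Qn v with hb
  have ha0 : ∀ v, 0 ≤ a v := fun v => mul_nonneg hpr0.le (hPn0 v)
  have hb0 : ∀ v, 0 ≤ b v := fun v => mul_nonneg h1pr.le (hQn0 v)
  have hsa : ∑ v, a v = pr := by
    rw [ha]; simp only [← Finset.mul_sum, hPn1, mul_one]
  have hsb : ∑ v, b v = 1 - pr := by
    rw [hb]; simp only [← Finset.mul_sum, hQn1, mul_one]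
  set e := bayesErr pr Pn Qn with he
  have hee : e = ∑ v, min (a v) (b v) := rfl
  have he0 : 0 ≤ e := by
    rw [hee]; exact Finset.sum_nonneg fun v _ => le_min (ha0 v) (hb0 v)
  -- split according to which term achieves the min
  set S : Finset (Fin n → X) := Finset.univ.filter (fun v => a v ≤ b v) with hS
  have hsum_split : ∑ v, a v ^ l * b v ^ (1 - l)
      = ∑ v ∈ S, a v ^ l * b v ^ (1 - l) + ∑ v ∈ Sᶜ, a v ^ l * b v ^ (1 - l) :=
    (Finset.sum_add_sum_compl S _).symm
  have hmin_nonneg : ∀ v ∈ Finset.univ, (0:ℝ) ≤ min (a v) (b v) :=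
    fun v _ => le_min (ha0 v) (hb0 v)
  have hSa : ∑ v ∈ S, a v ≤ e := by
    rw [hee]
    calc ∑ v ∈ S, a v = ∑ v ∈ S, min (a v) (b v) := by
          refine Finset.sum_congr rfl fun v hv => ?_
          rw [hS, Finset.mem_filter] at hv
          exact (min_eq_left hv.2).symm
      _ ≤ ∑ v, min (a v) (b v) :=
          Finset.sum_le_sum_of_subset_of_nonneg (Finset.subset_univ S)
            (fun v hv _ => hmin_nonneg v hv)
  have hScb : ∑ v ∈ Sᶜ, b v ≤ e := by
    rw [hee]
    calc ∑ v ∈ Sᶜ, b v = ∑ v ∈ Sᶜ, min (a v) (b v) := by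
          refine Finset.sum_congr rfl fun v hv => ?_
          rw [Finset.mem_compl, hS, Finset.mem_filter] at hv
          have hvu : v ∈ Finset.univ := Finset.mem_univ v
          have : ¬ a v ≤ b v := by tauto
          exact (min_eq_right (le_of_lt (lt_of_not_ge this))).symm
      _ ≤ ∑ v, min (a v) (b v) :=
          Finset.sum_le_sum_of_subset_of_nonneg (Finset.subset_univ _)
            (fun v hv _ => hmin_nonneg v hv)
  have hSb : ∑ v ∈ S, b v ≤ 1 - pr := by
    rw [← hsb]
    exact Finset.sum_le_sum_of_subset_of_nonneg (Finset.subset_univ S) fun v _ _ => hb0 v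
  have hSca : ∑ v ∈ Sᶜ, a v ≤ pr := by
    rw [← hsa]
    exact Finset.sum_le_sum_of_subset_of_nonneg (Finset.subset_univ _) fun v _ _ => ha0 v
  have hS_nonneg : (0:ℝ) ≤ ∑ v ∈ S, a v := Finset.sum_nonneg fun v _ => ha0 v
  have hSc_nonneg : (0:ℝ) ≤ ∑ v ∈ Sᶜ, b v := Finset.sum_nonneg fun v _ => hb0 v
  have hed : e ≤ δ := hn
  have h1 : ∑ v ∈ S, a v ^ l * b v ^ (1 - l) ≤ δ ^ l * (1 - pr) ^ (1 - l) := by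
    refine le_trans (holder_sum S a b ha0 hb0 hl0 hl1) ?_
    exact mul_le_mul (Real.rpow_le_rpow hS_nonneg (hSa.trans hed) hl0.le)
      (Real.rpow_le_rpow (Finset.sum_nonneg fun v _ => hb0 v) hSb hl1'.le)
      (Real.rpow_nonneg (Finset.sum_nonneg fun v _ => hb0 v) _)
      (Real.rpow_nonneg hδ0.le _)
  have h2 : ∑ v ∈ Sᶜ, a v ^ l * b v ^ (1 - l) ≤ pr ^ l * δ ^ (1 - l) := by
    refine le_trans (holder_sum Sᶜ a b ha0 hb0 hl0 hl1) ?_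
    exact mul_le_mul (Real.rpow_le_rpow (Finset.sum_nonneg fun v _ => ha0 v) hSca hl0.le)
      (Real.rpow_le_rpow hSc_nonneg (hScb.trans hed) hl1'.le)
      (Real.rpow_nonneg hSc_nonneg _)
      (Real.rpow_nonneg hpr0.le _)
  -- identify the LHS with the affinity
  have hlhs : ∑ v, a v ^ l * b v ^ (1 - l) = pr ^ l * (1 - pr) ^ (1 - l) * β ^ n := by
    have : ∀ v, a v ^ l * b v ^ (1 - l)
        = pr ^ l * (1 - pr) ^ (1 - l) * (Pn v ^ l * Qn v ^ (1 - l)) := by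
      intro v
      rw [ha, hb]
      rw [Real.mul_rpow hpr0.le (hPn0 v), Real.mul_rpow h1pr.le (hQn0 v)]
      ring
    rw [Finset.sum_congr rfl fun v _ => this v, ← Finset.mul_sum]
    congr 1
    rw [hβdef, ← betaAff_prodD l P Q hP0 hQ0 n]
    rfl
  have hmain : pr ^ l * (1 - pr) ^ (1 - l) * β ^ n
      ≤ δ ^ l * (1 - pr) ^ (1 - l) + pr ^ l * δ ^ (1 - l) := by
    rw [← hlhs, hsum_split]; exact add_le_add h1 h2
  -- divide through by pr^l * (1-pr)^(1-l)
  have hprl : (0:ℝ) < pr ^ l := Real.rpow_pos_of_pos hpr0 l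
  have h1prl : (0:ℝ) < (1 - pr) ^ (1 - l) := Real.rpow_pos_of_pos h1pr (1 - l)
  have hd1 : δ ^ l * (1 - pr) ^ (1 - l) = pr ^ l * (1 - pr) ^ (1 - l) * (δ / pr) ^ l := by
    rw [Real.div_rpow hδ0.le hpr0.le]
    field_simp
  have hd2 : pr ^ l * δ ^ (1 - l) = pr ^ l * (1 - pr) ^ (1 - l) * (δ / (1 - pr)) ^ (1 - l) := by
    rw [Real.div_rpow hδ0.le h1pr.le]
    field_simp
  have hβn : β ^ n ≤ 2 * (δ / pr) ^ l := by
    have := hmain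
    rw [hd1, hd2, hkey] at this
    have h2' : pr ^ l * (1 - pr) ^ (1 - l) * β ^ n
        ≤ pr ^ l * (1 - pr) ^ (1 - l) * (2 * (δ / pr) ^ l) := by
      calc pr ^ l * (1 - pr) ^ (1 - l) * β ^ n
          ≤ pr ^ l * (1 - pr) ^ (1 - l) * (δ / pr) ^ l
            + pr ^ l * (1 - pr) ^ (1 - l) * (δ / pr) ^ l := this
        _ = pr ^ l * (1 - pr) ^ (1 - l) * (2 * (δ / pr) ^ l) := by ring
    have hpos : (0:ℝ) < pr ^ l * (1 - pr) ^ (1 - l) := by positivity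
    exact (mul_le_mul_iff_right₀ hpos).mp h2'
  -- bound (δ/pr)^(l/2) ≤ 1/2
  have hdp0 : (0:ℝ) < δ / pr := by positivity
  have hdp16 : δ / pr ≤ 1 / 16 := by
    rw [div_le_div_iff₀ hpr0 (by norm_num)]; linarith
  have hdp1 : δ / pr ≤ 1 := by linarith
  have hu : (δ / pr) ^ (l / 2) ≤ 1 / 2 := by
    have s1 : (δ / pr) ^ (l / 2) ≤ (δ / pr) ^ ((1:ℝ)/4) := by
      apply Real.rpow_le_rpow_of_exponent_ge hdp0 hdp1
      linarith
    have s2 : (δ / pr) ^ ((1:ℝ)/4) ≤ (1/16 : ℝ) ^ ((1:ℝ)/4) :=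
      Real.rpow_le_rpow hdp0.le hdp16 (by norm_num)
    have s3 : ((1:ℝ)/16) ^ ((1:ℝ)/4) = 1 / 2 := by
      have h16 : ((1:ℝ)/16) = ((1:ℝ)/2) ^ (4:ℝ) := by
        rw [show (4:ℝ) = ((4:ℕ):ℝ) by norm_num, Real.rpow_natCast]
        norm_num
      rw [h16, ← Real.rpow_mul (by norm_num)]
      norm_num
    linarith
  have hu0 : 0 ≤ (δ / pr) ^ (l / 2) := Real.rpow_nonneg hdp0.le _
  have hβn2 : β ^ n ≤ (δ / pr) ^ (l / 2) := by
    have hsq : (δ / pr) ^ l = (δ / pr) ^ (l / 2) * (δ / pr) ^ (l / 2) := by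
      rw [← Real.rpow_add hdp0]; ring_nf
    calc β ^ n ≤ 2 * (δ / pr) ^ l := hβn
      _ = 2 * ((δ / pr) ^ (l / 2) * (δ / pr) ^ (l / 2)) := by rw [hsq]
      _ ≤ 2 * ((1/2) * (δ / pr) ^ (l / 2)) := by
          apply mul_le_mul_of_nonneg_left _ (by norm_num)
          exact mul_le_mul_of_nonneg_right hu hu0
      _ = (δ / pr) ^ (l / 2) := by ring
  -- conclude
  have hβ0 : 0 ≤ β := by
    rw [hβdef]
    exact Finset.sum_nonneg fun x _ =>
      mul_nonneg (Real.rpow_nonneg (hP0 x) _) (Real.rpow_nonneg (hQ0 x) _)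
  rcases eq_or_lt_of_le hβ0 with hβz | hβpos
  · rw [← hβz]
    simp only [div_zero, one_div, inv_zero, Real.log_zero]
    positivity
  · have hlogβ : Real.log (1 / β) = - Real.log β := by
      rw [one_div, Real.log_inv]
    have hlogβpos : 0 < Real.log (1 / β) := by
      rw [hlogβ, neg_pos]
      exact Real.log_neg hβpos hβ
    rw [ge_iff_le, div_le_iff₀ hlogβpos, hlogβ]
    have hlog1 : Real.log (β ^ n) ≤ Real.log ((δ / pr) ^ (l / 2)) :=
      Real.log_le_log (pow_pos hβpos n) hβn2
    rw [Real.log_pow, Real.log_rpow hdp0] at hlog1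
    have hlogflip : Real.log (δ / pr) = - Real.log (pr / δ) := by
      rw [← Real.log_inv]; congr 1; field_simp
    rw [hlogflip] at hlog1
    -- hlog1 : n * log β ≤ (l/2) * (- log (pr/δ))
    linarith [hlog1]
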